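/- Let X be a topological space. Then SeparationQuotient X is homeomorphic to a dense subspace of X: there exists a set S ⊆ X such that S is dense in X and the subspace S (with the subspace topology) is homeomorphic to SeparationQuotient X. -/

import Mathlib

open SeparationQuotient Function Set Topology

theorem separationQuotient_homeomorph_dense_subspace {X : Type*} [TopologicalSpace X] :
    ∃ S : Set X, Dense S ∧ Nonempty (↥S ≃ₜ SeparationQuotient X) := by
  have hsurj : Function.Surjective (SeparationQuotient.mk : X → SeparationQuotient X) :=
    surjective_mk
  set σ : SeparationQuotient X → X := Function.surjInv hsurj with hσ
  have hsec : ∀ q, SeparationQuotient.mk (σ q) = q := Function.surjInv_eq hsurj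
  have hinj : Function.Injective σ := by
    intro a b h
    rw [← hsec a, ← hsec b, h]
  refine ⟨Set.range σ, ?_, ?_⟩
  · -- density
    rw [dense_iff_closure_eq]
    ext x
    simp only [Set.mem_univ, iff_true]
    have hins : Inseparable (σ (SeparationQuotient.mk x)) x := by
      rw [← SeparationQuotient.mk_eq_mk, hsec]
    have : x ∈ closure {σ (SeparationQuotient.mk x)} :=
      specializes_iff_mem_closure.1 hins.specializes
    exact closure_mono (by simp [Set.singleton_subset_iff]) this
  · -- homeomorphism
    set e : SeparationQuotient X ≃ Set.range σ := Equiv.ofInjective σ hinj with he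
    have hsymm : ∀ x : Set.range σ, e.symm x = SeparationQuotient.mk (x : X) := by
      rintro ⟨x, q, rfl⟩
      apply e.injective
      rw [Equiv.apply_symm_apply]
      ext
      simp [he, Equiv.ofInjective_apply, hsec]
    refine ⟨Equiv.toHomeomorphOfContinuousOpen e.symm ?_ ?_⟩
    · have : (e.symm : Set.range σ → SeparationQuotient X)
          = SeparationQuotient.mk ∘ Subtype.val := funext hsymm
      rw [this]
      exact continuous_mk.comp continuous_subtype_val
    · intro U hU
      obtain ⟨V, hV, rfl⟩ := hU
      have himg : (e.symm) '' (Subtype.val ⁻¹' V) = SeparationQuotient.mk '' V := by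
        ext q
        constructor
        · rintro ⟨⟨x, hx⟩, hxV, rfl⟩
          exact ⟨x, hxV, (hsymm ⟨x, hx⟩).symm⟩
        · rintro ⟨v, hv, rfl⟩
          refine ⟨⟨σ (SeparationQuotient.mk v), ⟨_, rfl⟩⟩, ?_, ?_⟩
          · have hins : Inseparable (σ (SeparationQuotient.mk v)) v := by
              rw [← SeparationQuotient.mk_eq_mk, hsec]
            exact (hins.mem_open_iff hV).2 hv
          · rw [hsymm]
            exact hsec _
      rw [himg]
      exact isOpenMap_mk V hV
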